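/- Let E/F be a ramified quadratic extension of nonarchimedean local fields with residue cardinality q. For every n ≥ 1, the index [𝔬_E^× : 𝔬_F^× · 𝔲_E^{2n−1}] equals q^{n−1}. -/

import Mathlib

open IsLocalRing

namespace Stmt11Aux

variable (B : Type*) [CommRing B] [IsLocalRing B]

/-- The congruence subgroup 1 + m^i of units. -/
def U (i : ℕ) : Subgroup Bˣ where
  carrier := {u : Bˣ | (u : B) - 1 ∈ maximalIdeal B ^ i}
  one_mem' := by simpa using Ideal.zero_mem _
  mul_mem' := by
    intro u v hu hv
    have h : ((u * v : Bˣ) : B) - 1 = (u : B) * ((v : B) - 1) + ((u : B) - 1) := by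
      push_cast; ring
    show ((u * v : Bˣ) : B) - 1 ∈ maximalIdeal B ^ i
    rw [h]
    exact Ideal.add_mem _ (Ideal.mul_mem_left _ _ hv) hu
  inv_mem' := by
    intro u hu
    have h : ((u⁻¹ : Bˣ) : B) - 1 = -(u⁻¹ : Bˣ) * ((u : B) - 1) := by
      have h1 : ((u⁻¹ : Bˣ) : B) * (u : B) = 1 := by
        rw [← Units.val_mul, inv_mul_cancel, Units.val_one]
      linear_combination h1
    show ((u⁻¹ : Bˣ) : B) - 1 ∈ maximalIdeal B ^ i
    rw [h]
    exact Ideal.mul_mem_left _ _ hu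

variable {B}

theorem mem_U {i : ℕ} {u : Bˣ} : u ∈ U B i ↔ (u : B) - 1 ∈ maximalIdeal B ^ i :=
  Iff.rfl

theorem U_zero : U B 0 = ⊤ := by
  ext u; simp [mem_U]

theorem U_antitone {i j : ℕ} (h : i ≤ j) : U B j ≤ U B i := by
  intro u hu
  exact Ideal.pow_le_pow_right h hu


theorem mem_sup_of_diff {R : Subgroup Bˣ} {g x : Bˣ} (hg : g ∈ R) {i : ℕ}
    (h : (x : B) - (g : B) ∈ maximalIdeal B ^ i) : x ∈ R ⊔ U B i := by
  have hgi : ((g⁻¹ : Bˣ) : B) * (g : B) = 1 := by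
    rw [← Units.val_mul, inv_mul_cancel, Units.val_one]
  have hmem : g⁻¹ * x ∈ U B i := by
    rw [mem_U]
    have heq : ((g⁻¹ * x : Bˣ) : B) - 1 = ((g⁻¹ : Bˣ) : B) * ((x : B) - (g : B)) := by
      push_cast
      linear_combination hgi
    rw [heq]
    exact Ideal.mul_mem_left _ _ h
  have hx : x = g * (g⁻¹ * x) := by rw [mul_inv_cancel_left]
  rw [hx]
  exact Subgroup.mul_mem_sup hg hmem

section Theta

variable [IsDomain B] [IsDiscreteValuationRing B] {π : B} {m : ℕ}

theorem dvd_of_mem_U (hπ : Irreducible π) {u : Bˣ} (hu : u ∈ U B m) : π ^ m ∣ (u : B) - 1 := by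
  rw [mem_U, hπ.maximalIdeal_eq, Ideal.span_singleton_pow] at hu
  exact Ideal.mem_span_singleton.mp hu

noncomputable def yval (hπ : Irreducible π) (u : U B m) : B := (dvd_of_mem_U hπ u.2).choose

theorem yval_spec (hπ : Irreducible π) (u : U B m) : ((u : Bˣ) : B) - 1 = π ^ m * yval hπ u :=
  (dvd_of_mem_U hπ u.2).choose_spec

theorem yval_unique (hπ : Irreducible π) {u : U B m} {y : B} (h : ((u : Bˣ) : B) - 1 = π ^ m * y) :
    yval hπ u = y :=
  mul_left_cancel₀ (pow_ne_zero m hπ.ne_zero) (by rw [← yval_spec hπ u, h])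

noncomputable def theta (hπ : Irreducible π) (hm : 1 ≤ m) : U B m →* Multiplicative (ResidueField B) where
  toFun u := Multiplicative.ofAdd (residue B (yval hπ u))
  map_one' := by
    have h : yval hπ (1 : U B m) = 0 := yval_unique hπ (by simp)
    simp [h]
  map_mul' u v := by
    obtain ⟨m', rfl⟩ : ∃ m', m = m' + 1 := ⟨m - 1, by omega⟩
    have hu := yval_spec hπ u
    have hv := yval_spec hπ v
    have huv : ((↑(u * v) : Bˣ) : B) - 1 =
        π ^ (m' + 1) * (π ^ (m' + 1) * (yval hπ u * yval hπ v) + yval hπ u + yval hπ v) := by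
      have hmul : ((↑(u * v) : Bˣ) : B) = ((u : Bˣ) : B) * ((v : Bˣ) : B) := by
        push_cast; ring
      rw [hmul]; linear_combination (((v : Bˣ) : B)) * hu + hv + π ^ (m' + 1) * yval hπ u * hv
    have hz : residue B (π ^ (m' + 1) * (yval hπ u * yval hπ v)) = 0 := by
      refine Ideal.Quotient.eq_zero_iff_mem.mpr ?_
      rw [pow_succ']
      exact Ideal.mul_mem_right _ _ (Ideal.mul_mem_right _ _
        ((IsLocalRing.mem_maximalIdeal π).mpr hπ.not_isUnit))
    have h := yval_unique hπ huv
    simp only [h, map_add, hz, zero_add]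
    rfl

theorem theta_surjective (hπ : Irreducible π) (hm : 1 ≤ m) : Function.Surjective (theta (B := B) hπ hm) := by
  intro z
  obtain ⟨b, hb⟩ := Ideal.Quotient.mk_surjective (I := maximalIdeal B) z.toAdd
  have hmem : -(π ^ m * b) ∈ nonunits B := by
    rw [← IsLocalRing.mem_maximalIdeal _]
    refine neg_mem (Ideal.mul_mem_right _ _ ?_)
    obtain ⟨m', rfl⟩ : ∃ m', m = m' + 1 := ⟨m - 1, by omega⟩
    rw [pow_succ']
    exact Ideal.mul_mem_right _ _ ((IsLocalRing.mem_maximalIdeal π).mpr hπ.not_isUnit)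
  have hun : IsUnit (1 + π ^ m * b) := by
    have := IsLocalRing.isUnit_one_sub_self_of_mem_nonunits _ hmem
    simpa using this
  have hUmem : hun.unit ∈ U B m := by
    rw [mem_U, hun.unit_spec, hπ.maximalIdeal_eq, Ideal.span_singleton_pow]
    exact Ideal.mem_span_singleton.mpr ⟨b, by ring⟩
  refine ⟨⟨hun.unit, hUmem⟩, ?_⟩
  have hy : yval hπ (⟨hun.unit, hUmem⟩ : U B m) = b :=
    yval_unique hπ (by rw [hun.unit_spec]; ring)
  show Multiplicative.ofAdd (residue B (yval hπ _)) = z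
  rw [hy]
  show Multiplicative.ofAdd (Ideal.Quotient.mk _ b) = z
  rw [hb]
  rfl

theorem theta_ker (hπ : Irreducible π) (hm : 1 ≤ m) : (theta (B := B) hπ hm).ker = (U B (m + 1)).subgroupOf (U B m) := by
  ext u
  rw [MonoidHom.mem_ker, Subgroup.mem_subgroupOf]
  constructor
  · intro h
    have h0 : residue B (yval hπ u) = 0 := by
      have : (Multiplicative.ofAdd (residue B (yval hπ u))) = 1 := h
      simpa using this
    obtain ⟨c, hc⟩ := Ideal.mem_span_singleton.mp
      (by rw [← hπ.maximalIdeal_eq]; exact Ideal.Quotient.eq_zero_iff_mem.mp h0)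
    rw [mem_U, hπ.maximalIdeal_eq, Ideal.span_singleton_pow]
    refine Ideal.mem_span_singleton.mpr ⟨c, ?_⟩
    rw [yval_spec hπ u, hc]; ring
  · intro h
    rw [mem_U, hπ.maximalIdeal_eq, Ideal.span_singleton_pow] at h
    obtain ⟨c, hc⟩ := Ideal.mem_span_singleton.mp h
    have hy : yval hπ u = π * c := by
      refine mul_left_cancel₀ (pow_ne_zero m hπ.ne_zero) ?_
      rw [← yval_spec hπ u, hc]; ring
    have h0 : residue B (yval hπ u) = 0 := by
      rw [hy]
      exact Ideal.Quotient.eq_zero_iff_mem.mpr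
        (Ideal.mul_mem_right _ _ ((IsLocalRing.mem_maximalIdeal π).mpr hπ.not_isUnit))
    show Multiplicative.ofAdd (residue B (yval hπ u)) = 1
    simp [h0]

theorem relindex_U (hπ : Irreducible π) (hm : 1 ≤ m) : (U B (m + 1)).relIndex (U B m) = Nat.card (ResidueField B) := by
  rw [Subgroup.relIndex, ← theta_ker hπ hm, Subgroup.index_ker,
    MonoidHom.range_eq_top.mpr (theta_surjective hπ hm)]
  rw [Nat.card_congr Subgroup.topEquiv.toEquiv]
  rfl

end Theta

end Stmt11Aux


theorem stmt11 {A B : Type*} [CommRing A] [CommRing B] [IsDomain A] [IsDomain B]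
    [IsDiscreteValuationRing A] [IsDiscreteValuationRing B] [Algebra A B]
    [Module.Free A B] [Module.Finite A B]
    (hquad : Module.finrank A B = 2)
    (hram : Ideal.map (algebraMap A B) (IsLocalRing.maximalIdeal A) =
      IsLocalRing.maximalIdeal B ^ 2)
    (hressurj : Function.Surjective fun a : A =>
      Ideal.Quotient.mk (IsLocalRing.maximalIdeal B) (algebraMap A B a))
    (q : ℕ) (hq : Nat.card (IsLocalRing.ResidueField A) = q)
    (n : ℕ) (hn : 1 ≤ n) :
    (Subgroup.closure
        (Set.range (Units.map (algebraMap A B : A →+* B).toMonoidHom) ∪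
          {u : Bˣ | (u : B) - 1 ∈ IsLocalRing.maximalIdeal B ^ (2 * n - 1)})).index =
      q ^ (n - 1) := by
  classical
  obtain ⟨πA, hπA⟩ := IsDiscreteValuationRing.exists_irreducible A
  obtain ⟨πB, hπB⟩ := IsDiscreteValuationRing.exists_irreducible B
  set f : A →+* B := algebraMap A B with hf
  -- the image of the maximal ideal of A lands in the maximal ideal of B
  have hmap_le : ∀ a ∈ IsLocalRing.maximalIdeal A, f a ∈ IsLocalRing.maximalIdeal B := by
    intro a ha
    have h1 : f a ∈ Ideal.map f (IsLocalRing.maximalIdeal A) := Ideal.mem_map_of_mem f ha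
    rw [hram] at h1
    exact Ideal.pow_le_self two_ne_zero h1
  -- the residue field of B has cardinality q
  have hcardB : Nat.card (IsLocalRing.ResidueField B) = q := by
    have hlift : ∀ a ∈ IsLocalRing.maximalIdeal A,
        ((IsLocalRing.residue B).comp f) a = 0 := fun a ha =>
      Ideal.Quotient.eq_zero_iff_mem.mpr (hmap_le a ha)
    set φ : IsLocalRing.ResidueField A →+* IsLocalRing.ResidueField B :=
      Ideal.Quotient.lift (IsLocalRing.maximalIdeal A) ((IsLocalRing.residue B).comp f) hlift
      with hφ
    have hsurj : Function.Surjective φ := by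
      intro z
      obtain ⟨a, ha⟩ := hressurj z
      exact ⟨IsLocalRing.residue A a, ha⟩
    rw [← hq]
    exact (Nat.card_congr (Equiv.ofBijective φ ⟨φ.injective, hsurj⟩)).symm
  set R : Subgroup Bˣ := (Units.map (f : A →+* B).toMonoidHom).range with hR
  set K : ℕ → Subgroup Bˣ := fun i => R ⊔ Stmt11Aux.U B i with hK
  have hKmono : ∀ {i j : ℕ}, i ≤ j → K j ≤ K i := fun h =>
    sup_le le_sup_left ((Stmt11Aux.U_antitone h).trans le_sup_right)
  -- the subgroup in question is K (2*n-1)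
  have hgoal_eq : (Subgroup.closure
      (Set.range (Units.map (f : A →+* B).toMonoidHom) ∪
        {u : Bˣ | (u : B) - 1 ∈ IsLocalRing.maximalIdeal B ^ (2 * n - 1)})) = K (2 * n - 1) := by
    rw [Subgroup.closure_union, hK]
    congr 1
    · rw [← MonoidHom.coe_range, Subgroup.closure_eq]
    · exact Subgroup.closure_eq (Stmt11Aux.U B (2 * n - 1))
  -- f πA is associated to πB ^ 2
  have hassoc : Associated (f πA) (πB ^ 2) := by
    rw [← Ideal.span_singleton_eq_span_singleton, ← Ideal.span_singleton_pow,
      ← hπB.maximalIdeal_eq, ← hram, hπA.maximalIdeal_eq, Ideal.map_span, Set.image_singleton]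
  obtain ⟨w, hw⟩ := hassoc
  -- parity: an image unit that is ≡ 1 mod m_B^(2k+1) is ≡ 1 mod m_B^(2k+2)
  have hparity : ∀ k : ℕ, R ⊓ Stmt11Aux.U B (2 * k + 1) ≤ Stmt11Aux.U B (2 * k + 2) := by
    rintro k x ⟨hxR, hxU⟩
    obtain ⟨a, rfl⟩ := hxR
    have hcoe : ((Units.map (f : A →+* B).toMonoidHom a : Bˣ) : B) = f (a : A) := rfl
    have hsub : f (a : A) - 1 = f ((a : A) - 1) := by rw [map_sub, map_one]
    have hxU' : f ((a : A) - 1) ∈ IsLocalRing.maximalIdeal B ^ (2 * k + 1) := by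
      have h0 : ((Units.map (f : A →+* B).toMonoidHom a : Bˣ) : B) - 1 ∈
          IsLocalRing.maximalIdeal B ^ (2 * k + 1) := hxU
      rwa [hcoe, hsub] at h0
    refine Stmt11Aux.mem_U.mpr ?_
    rw [hcoe, hsub]
    clear hxU
    rename' hxU' => hxU
    by_cases ht : ((a : A) - 1) = 0
    · rw [ht, map_zero]; exact Ideal.zero_mem _
    · obtain ⟨j, u, hu⟩ := IsDiscreteValuationRing.eq_unit_mul_pow_irreducible ht hπA
      have hπA2 : f πA = πB ^ 2 * ((w⁻¹ : Bˣ) : B) := by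
        rw [← hw, mul_assoc, Units.mul_inv, mul_one]
      have he : IsUnit (f (u : A) * ((w⁻¹ : Bˣ) : B) ^ j) :=
        (u.isUnit.map f).mul ((w⁻¹).isUnit.pow j)
      have hft : f ((a : A) - 1) = (f (u : A) * ((w⁻¹ : Bˣ) : B) ^ j) * πB ^ (2 * j) := by
        rw [hu, map_mul, map_pow, hπA2, mul_pow, ← pow_mul]
        ring
      rw [hπB.maximalIdeal_eq, Ideal.span_singleton_pow, Ideal.mem_span_singleton] at hxU ⊢
      rw [hft] at hxU ⊢
      have hdvd : πB ^ (2 * k + 1) ∣ πB ^ (2 * j) := (he.dvd_mul_left).mp hxU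
      have hle : 2 * k + 1 ≤ 2 * j := (pow_dvd_pow_iff hπB.ne_zero hπB.not_isUnit).mp hdvd
      exact (pow_dvd_pow πB (show 2 * k + 2 ≤ 2 * j by omega)).mul_left _
  -- even step: K (2k) = K (2k+1)
  have heven : ∀ k : ℕ, K (2 * k) = K (2 * k + 1) := by
    intro k
    refine le_antisymm (sup_le le_sup_left ?_) (hKmono (Nat.le_succ _))
    intro x hx
    show x ∈ R ⊔ Stmt11Aux.U B (2 * k + 1)
    rcases Nat.eq_zero_or_pos k with rfl | hk
    · -- k = 0 : approximate by a unit with the same residue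
      obtain ⟨a, ha⟩ := hressurj (Ideal.Quotient.mk (IsLocalRing.maximalIdeal B) (x : B))
      simp only at ha
      have haunit : IsUnit a := by
        by_contra hna
        have h1 : f a ∈ IsLocalRing.maximalIdeal B := hmap_le a hna
        rw [← Ideal.Quotient.eq_zero_iff_mem, ha, Ideal.Quotient.eq_zero_iff_mem] at h1
        exact ((IsLocalRing.mem_maximalIdeal _).mp h1) x.isUnit
      have hgR : Units.map (f : A →+* B).toMonoidHom haunit.unit ∈ R := ⟨haunit.unit, rfl⟩
      refine Stmt11Aux.mem_sup_of_diff hgR ?_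
      have hgv : ((Units.map (f : A →+* B).toMonoidHom haunit.unit : Bˣ) : B) = f a := by
        simp [haunit.unit_spec]
      rw [hgv, pow_one, ← Ideal.Quotient.eq_zero_iff_mem, map_sub, ha, sub_self]
    · -- k ≥ 1
      obtain ⟨k', rfl⟩ : ∃ k', k = k' + 1 := ⟨k - 1, by omega⟩
      have hmm : IsLocalRing.maximalIdeal B ^ (2 * (k' + 1)) = Ideal.span {f (πA ^ (k' + 1))} := by
        rw [pow_mul, ← hram, ← Ideal.map_pow, hπA.maximalIdeal_eq, Ideal.span_singleton_pow,
          Ideal.map_span, Set.image_singleton]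
      rw [Stmt11Aux.mem_U, hmm, Ideal.mem_span_singleton] at hx
      obtain ⟨y, hy⟩ := hx
      obtain ⟨c, hc⟩ := hressurj (IsLocalRing.residue B y)
      simp only at hc
      have hamem : -(πA ^ (k' + 1) * c) ∈ nonunits A := by
        rw [← IsLocalRing.mem_maximalIdeal]
        refine neg_mem (Ideal.mul_mem_right _ _ ?_)
        rw [pow_succ']
        exact Ideal.mul_mem_right _ _ ((IsLocalRing.mem_maximalIdeal πA).mpr hπA.not_isUnit)
      have haunit : IsUnit (1 + πA ^ (k' + 1) * c) := by
        have h1 := IsLocalRing.isUnit_one_sub_self_of_mem_nonunits _ hamem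
        simpa using h1
      have hgR : Units.map (f : A →+* B).toMonoidHom haunit.unit ∈ R := ⟨haunit.unit, rfl⟩
      refine Stmt11Aux.mem_sup_of_diff hgR ?_
      have hgv : ((Units.map (f : A →+* B).toMonoidHom haunit.unit : Bˣ) : B) =
          1 + f (πA ^ (k' + 1)) * f c := by
        have h0 : ((Units.map (f : A →+* B).toMonoidHom haunit.unit : Bˣ) : B) =
            f ((haunit.unit : Aˣ) : A) := rfl
        rw [h0, haunit.unit_spec, map_add, map_one, map_mul]
      have hdiff : (x : B) - (1 + f (πA ^ (k' + 1)) * f c) = f (πA ^ (k' + 1)) * (y - f c) := by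
        linear_combination hy
      rw [hgv, hdiff, pow_succ]
      refine Ideal.mul_mem_mul ?_ ?_
      · rw [hmm]
        exact Ideal.mem_span_singleton_self _
      · rw [← Ideal.Quotient.eq_zero_iff_mem, map_sub, sub_eq_zero]
        exact hc.symm
  -- odd step: relative index q
  have hodd : ∀ k : ℕ, (K (2 * k + 2)).relIndex (K (2 * k + 1)) = q := by
    intro k
    have h1 : K (2 * k + 1) = Stmt11Aux.U B (2 * k + 1) ⊔ K (2 * k + 2) := by
      apply le_antisymm
      · show R ⊔ Stmt11Aux.U B (2 * k + 1) ≤ _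
        exact sup_le (le_sup_of_le_right le_sup_left) le_sup_left
      · exact sup_le le_sup_right (hKmono (Nat.le_succ _))
    rw [h1, Subgroup.relIndex_sup_right, ← Subgroup.inf_relIndex_right]
    have h2 : K (2 * k + 2) ⊓ Stmt11Aux.U B (2 * k + 1) =
        Stmt11Aux.U B (2 * k + 2) ⊓ Stmt11Aux.U B (2 * k + 1) := by
      refine le_antisymm ?_ (inf_le_inf_right _ le_sup_right)
      rintro x ⟨hxK, hxU⟩
      obtain ⟨r, hr, v, hv, rfl⟩ := Subgroup.mem_sup.mp hxK
      have hrv : r ∈ Stmt11Aux.U B (2 * k + 1) := by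
        have hv1 : v ∈ Stmt11Aux.U B (2 * k + 1) := Stmt11Aux.U_antitone (Nat.le_succ _) hv
        have : r = r * v * v⁻¹ := by group
        rw [this]
        exact mul_mem hxU (inv_mem hv1)
      have hr2 : r ∈ Stmt11Aux.U B (2 * k + 2) := hparity k ⟨hr, hrv⟩
      exact ⟨mul_mem hr2 hv, hxU⟩
    rw [h2, Subgroup.inf_relIndex_right,
      Stmt11Aux.relindex_U hπB (show 1 ≤ 2 * k + 1 by omega), hcardB]
  -- induction
  have hind : ∀ j : ℕ, (K (2 * j + 1)).index = q ^ j := by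
    intro j
    induction j with
    | zero =>
      have h0 : K (2 * 0 + 1) = ⊤ := by
        rw [← heven 0]
        show R ⊔ Stmt11Aux.U B (2 * 0) = ⊤
        rw [show 2 * 0 = 0 from rfl, Stmt11Aux.U_zero, sup_top_eq]
      rw [h0, Subgroup.index_top, pow_zero]
    | succ j ih =>
      have hle : K (2 * j + 2) ≤ K (2 * j + 1) := hKmono (by omega)
      have hmul := Subgroup.relIndex_mul_index hle
      rw [hodd j, ih] at hmul
      have h2 : 2 * (j + 1) = 2 * j + 2 := by ring
      have heq : K (2 * (j + 1) + 1) = K (2 * j + 2) := by rw [← heven (j + 1), h2]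
      rw [heq, ← hmul, pow_succ]
      ring
  have hfin : 2 * n - 1 = 2 * (n - 1) + 1 := by omega
  rw [hgoal_eq, hfin, hind (n - 1)]
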